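/- Let G be a countable discrete group, X a locally compact Hausdorff space with a proper, cocompact G-action, c a cut-off function on X (compactly supported, continuous, nonnegative, with ∑_{h∈G} c(h⁻¹·x)² = 1 for every x), and π : C₀(X) → B(H) a nondegenerate covariant representation on the G-Hilbert space H. Define V : H → ℓ²(G, H) by (Vv)_h = π(c) u_h v. Then V is a well-defined linear isometry; its adjoint is given by V*((ξ_h)_{h∈G}) = ∑_{h∈G} u_h⁻¹ π(c) ξ_h, the sum converging in H; and V intertwines the right-translation representation with u: R_g V = V u_g for every g ∈ G, where (R_g ξ)_h = ξ_{hg}. -/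

import Mathlib

open scoped ZeroAtInfty
open Filter MeasureTheory Topology

noncomputable section

variable {G : Type*} [Group G] [Countable G] [TopologicalSpace G] [DiscreteTopology G]
variable {X : Type*} [TopologicalSpace X] [LocallyCompactSpace X] [T2Space X]
variable [MulAction G X] [ContinuousConstSMul G X]
variable {H : Type*} [NormedAddCommGroup H] [InnerProductSpace ℂ H] [CompleteSpace H]
  [SecondCountableTopology H]

/-- The translation action of `G` on `C₀(X, ℂ)`: `(g • φ)(x) = φ(g⁻¹ • x)`. -/
def C0smul (g : G) (φ : C₀(X, ℂ)) : C₀(X, ℂ) where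
  toFun := fun x => φ (g⁻¹ • x)
  continuous_toFun := φ.continuous.comp (continuous_const_smul g⁻¹)
  zero_at_infty' := φ.zero_at_infty'.comp
    ((Homeomorph.smul (g⁻¹ : G)).toCocompactMap.cocompact_tendsto')

/-- Conjugation `g(T) = u_g T u_g⁻¹` by the unitary representation `u`. -/
def conjU (u : G →* unitary (H →L[ℂ] H)) (g : G) (T : H →L[ℂ] H) : H →L[ℂ] H :=
  (u g : H →L[ℂ] H) * T * ((u g⁻¹ : unitary (H →L[ℂ] H)) : H →L[ℂ] H)

/-- The Hilbert space `ℓ²(G, H)`. -/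
abbrev l2GH (G H : Type*) [NormedAddCommGroup H] [InnerProductSpace ℂ H] : Type _ :=
  lp (fun _ : G => H) 2

set_option maxHeartbeats 2000000 in
theorem statement_12
    (u : G →* unitary (H →L[ℂ] H))
    (π : C₀(X, ℂ) →⋆ₙₐ[ℂ] (H →L[ℂ] H))
    (hπnd : Dense (Submodule.span ℂ (Set.range fun p : C₀(X, ℂ) × H => π p.1 p.2) : Set H))
    (hcov : ∀ (g : G) (φ : C₀(X, ℂ)),
      (u g : H →L[ℂ] H) * π φ * ((u g⁻¹ : unitary (H →L[ℂ] H)) : H →L[ℂ] H) = π (C0smul g φ))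
    (hproper : IsProperMap fun p : G × X => (p.1 • p.2, p.2))
    (hcocompact : CompactSpace (Quotient (MulAction.orbitRel G X)))
    (c : C₀(X, ℂ)) (hcs : HasCompactSupport (⇑c))
    (hc_real : ∀ x : X, (c x).im = 0) (hc_nonneg : ∀ x : X, 0 ≤ (c x).re)
    (hc_sum : ∀ x : X, HasSum (fun h : G => c (h⁻¹ • x) ^ 2) 1) :
    ∃ V : H →L[ℂ] l2GH G H,
      (∀ v : H, ‖V v‖ = ‖v‖) ∧
      (∀ (v : H) (h : G), (V v) h = π c ((u h : H →L[ℂ] H) v)) ∧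
      (∀ ξ : l2GH G H,
        HasSum (fun h : G => (u h⁻¹ : H →L[ℂ] H) (π c (ξ h)))
          ((ContinuousLinearMap.adjoint V) ξ)) ∧
      (∀ g : G, ∃ R : l2GH G H →L[ℂ] l2GH G H,
        (∀ (ξ : l2GH G H) (h : G), (R ξ) h = ξ (h * g)) ∧
        R.comp V = V.comp ((u g : H →L[ℂ] H))) := by
  classical
  -- basic facts about the unitaries
  have hUstar : ∀ g : G,
      star ((u g : H →L[ℂ] H)) = ((u g⁻¹ : unitary (H →L[ℂ] H)) : H →L[ℂ] H) := by
    intro g; rw [← Unitary.coe_star, Unitary.star_eq_inv, ← map_inv]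
  have hUadj : ∀ g : G,
      ContinuousLinearMap.adjoint ((u g : H →L[ℂ] H))
        = ((u g⁻¹ : unitary (H →L[ℂ] H)) : H →L[ℂ] H) := by
    intro g; rw [← ContinuousLinearMap.star_eq_adjoint, hUstar]
  -- `c` is self-adjoint
  have hcstar : star c = c := by
    ext x
    show star (c x) = c x
    rw [Complex.star_def]
    exact Complex.conj_eq_iff_im.mpr (hc_real x)
  have hπcsa : ContinuousLinearMap.adjoint (π c) = π c := by
    rw [← ContinuousLinearMap.star_eq_adjoint, ← map_star, hcstar]
  have hcre : ∀ y : X, c y = (((c y).re : ℝ) : ℂ) := by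
    intro y
    exact Complex.ext (by simp) (by simp [hc_real y])
  -- the real-valued family summing to 1
  have hcr : ∀ x : X, HasSum (fun h : G => (c (h • x)).re ^ 2) 1 := by
    intro x
    have h2 : HasSum (fun h : G => c (h • x) ^ 2) 1 := by
      have h1 := (Equiv.inv G).hasSum_iff.mpr (hc_sum x)
      simpa [Function.comp_def, Equiv.inv_apply, inv_inv] using h1
    have h3 := Complex.reCLM.hasSum h2
    simp only [Complex.reCLM_apply, Complex.one_re] at h3
    have h4 : (fun h : G => (c (h • x) ^ 2).re) = fun h : G => (c (h • x)).re ^ 2 :=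
      funext fun h => by rw [sq, Complex.mul_re, hc_real]; ring
    rwa [h4] at h3
  -- partial sums of the cut-off family
  set ψ : Finset G → C₀(X, ℂ) := fun F => ∑ h ∈ F, C0smul h⁻¹ (c * c) with hψ
  have hψ_apply : ∀ (F : Finset G) (x : X),
      ψ F x = (((∑ h ∈ F, (c (h • x)).re ^ 2 : ℝ)) : ℂ) := by
    intro F x
    have : ψ F x = ∑ h ∈ F, (c (h • x)) * c (h • x) := by
      induction F using Finset.cons_induction with
      | empty => simp [hψ]
      | cons a s ha ih =>
          simp only [hψ, Finset.sum_cons]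
          rw [show ((C0smul a⁻¹ (c * c) + ∑ h ∈ s, C0smul h⁻¹ (c * c)) : C₀(X, ℂ)) x
                = C0smul a⁻¹ (c * c) x + (∑ h ∈ s, C0smul h⁻¹ (c * c)) x from rfl]
          rw [show (∑ h ∈ s, C0smul h⁻¹ (c * c) : C₀(X, ℂ)) x
                = ∑ h ∈ s, (c (h • x)) * c (h • x) from ih]
          show (c * c) (a⁻¹⁻¹ • x) + _ = _
          rw [inv_inv]
          rfl
    rw [this]
    push_cast
    refine Finset.sum_congr rfl fun h _ => ?_
    have h0 := hc_real (h • x)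
    apply Complex.ext <;>
      simp [Complex.mul_re, Complex.mul_im, h0, sq]
  have hψx_le : ∀ (F : Finset G) (x : X), ‖ψ F x‖ ≤ 1 := by
    intro F x
    rw [hψ_apply F x, Complex.norm_real, Real.norm_eq_abs, abs_of_nonneg
      (Finset.sum_nonneg fun i _ => sq_nonneg _)]
    exact sum_le_hasSum F (fun i _ => sq_nonneg _) (hcr x)
  have hψnorm : ∀ F : Finset G, ‖ψ F‖ ≤ 1 := by
    intro F
    rw [← ZeroAtInftyContinuousMap.norm_toBCF_eq_norm]
    exact (BoundedContinuousFunction.norm_le zero_le_one).mpr fun x => hψx_le F x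
  have hTnorm : ∀ F : Finset G, ‖π (ψ F)‖ ≤ 1 :=
    fun F => (NonUnitalStarAlgHom.norm_apply_le π (ψ F)).trans (hψnorm F)
  -- partial sums of the norms as quadratic forms
  have hterm : ∀ (h : G) (v : H),
      ((inner ℂ ((π (C0smul h⁻¹ (c * c))) v) v : ℂ)).re
        = ‖π c ((u h : H →L[ℂ] H) v)‖ ^ 2 := by
    intro h v
    rw [← hcov h⁻¹ (c * c), inv_inv, ContinuousLinearMap.mul_apply,
      ContinuousLinearMap.mul_apply, ← hUadj h, ContinuousLinearMap.adjoint_inner_left,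
      map_mul, ContinuousLinearMap.mul_apply,
      ← ContinuousLinearMap.adjoint_inner_right, hπcsa]
    simpa using inner_self_eq_norm_sq (𝕜 := ℂ) ((π c) ((u h : H →L[ℂ] H) v))
  have hsum_eq : ∀ (F : Finset G) (v : H),
      ∑ h ∈ F, ‖π c ((u h : H →L[ℂ] H) v)‖ ^ 2 = ((inner ℂ ((π (ψ F)) v) v : ℂ)).re := by
    intro F v
    have : (π (ψ F)) v = ∑ h ∈ F, (π (C0smul h⁻¹ (c * c))) v := by
      rw [hψ, map_sum]
      exact ContinuousLinearMap.sum_apply _ _ _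
    rw [this, sum_inner, Complex.re_sum]
    exact (Finset.sum_congr rfl fun h _ => hterm h v).symm
  -- multiplication by the partial sums converges to the identity on C₀
  have hmul_key : ∀ φ : C₀(X, ℂ), Tendsto (fun F => ψ F * φ) atTop (𝓝 φ) := by
    intro φ
    rw [Metric.tendsto_nhds]
    intro ε hε
    have hball : φ ⁻¹' Metric.closedBall 0 (ε / 3) ∈ cocompact X :=
      φ.zero_at_infty' (Metric.closedBall_mem_nhds 0 (by positivity))
    obtain ⟨K, hK, hKsub⟩ := mem_cocompact.mp hball
    have hpre : IsCompact ((fun p : G × X => (p.1 • p.2, p.2)) ⁻¹' (tsupport (⇑c) ×ˢ K)) :=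
      hproper.isCompact_preimage (hcs.prod hK)
    have hSfin :
        (Prod.fst '' ((fun p : G × X => (p.1 • p.2, p.2)) ⁻¹' (tsupport (⇑c) ×ˢ K))).Finite :=
      (hpre.image continuous_fst).finite_of_discrete
    refine eventually_atTop.mpr ⟨hSfin.toFinset, fun F hF => ?_⟩
    rw [dist_eq_norm]
    have hb : ‖ψ F * φ - φ‖ ≤ 2 * (ε / 3) := by
      rw [← ZeroAtInftyContinuousMap.norm_toBCF_eq_norm]
      refine (BoundedContinuousFunction.norm_le (by positivity)).mpr fun x => ?_
      have hval : ((ψ F * φ - φ).toBCF) x = (ψ F x - 1) * φ x := by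
        show (ψ F) x * φ x - φ x = _
        ring
      rw [hval]
      by_cases hx : x ∈ K
      · have hzero : ∀ h : G, h ∉ F → (c (h • x)).re ^ 2 = 0 := by
          intro h hh
          have hc0 : c (h • x) = 0 := by
            by_contra hne
            have hmem : h • x ∈ tsupport (⇑c) := subset_tsupport _ (Function.mem_support.mpr hne)
            have hmem2 : (h, x) ∈ (fun p : G × X => (p.1 • p.2, p.2)) ⁻¹' (tsupport (⇑c) ×ˢ K) := by
              simp only [Set.mem_preimage, Set.mem_prod]
              exact ⟨hmem, hx⟩
            have : h ∈ hSfin.toFinset := by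
              rw [Set.Finite.mem_toFinset]
              exact ⟨(h, x), hmem2, rfl⟩
            exact hh (hF this)
          rw [hc0]
          simp
        have hsum1 : ∑ h ∈ F, (c (h • x)).re ^ 2 = 1 :=
          (hasSum_sum_of_ne_finset_zero hzero).unique (hcr x)
        have hone : ψ F x = 1 := by
          rw [hψ_apply F x, hsum1]
          norm_num
        rw [hone]
        simp
        positivity
      · have h1 : ‖ψ F x - 1‖ ≤ 2 := by
          refine (norm_sub_le _ _).trans ?_
          have := hψx_le F x
          simp only [norm_one]
          linarith
        have h2 : ‖φ x‖ ≤ ε / 3 := by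
          have := hKsub hx
          simpa [Metric.mem_closedBall, dist_zero_right] using this
        calc ‖(ψ F x - 1) * φ x‖ = ‖ψ F x - 1‖ * ‖φ x‖ := norm_mul _ _
          _ ≤ 2 * (ε / 3) := mul_le_mul h1 h2 (norm_nonneg _) (by norm_num)
    calc ‖ψ F * φ - φ‖ ≤ 2 * (ε / 3) := hb
      _ < ε := by linarith
  -- convergence on the generators
  have hgen : ∀ (φ : C₀(X, ℂ)) (w : H),
      Tendsto (fun F => (π (ψ F)) ((π φ) w)) atTop (𝓝 ((π φ) w)) := by
    intro φ w
    let L0 : C₀(X, ℂ) →ₗ[ℂ] H :=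
      { toFun := fun a => (π a) w
        map_add' := fun a b => by simp [map_add]
        map_smul' := fun r a => by simp [_root_.map_smul] }
    have hLb : ∀ a : C₀(X, ℂ), ‖L0 a‖ ≤ ‖w‖ * ‖a‖ := by
      intro a
      calc ‖(π a) w‖ ≤ ‖π a‖ * ‖w‖ := (π a).le_opNorm w
        _ ≤ ‖a‖ * ‖w‖ :=
            mul_le_mul_of_nonneg_right (NonUnitalStarAlgHom.norm_apply_le π a) (norm_nonneg w)
        _ = ‖w‖ * ‖a‖ := mul_comm _ _
    let L := L0.mkContinuous ‖w‖ hLb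
    have h5 := (L.continuous.tendsto φ).comp (hmul_key φ)
    have h6 : (fun F => L (ψ F * φ)) = fun F => (π (ψ F)) ((π φ) w) := by
      funext F
      show (π (ψ F * φ)) w = _
      rw [map_mul]
      rfl
    rw [show ((L ∘ fun F => ψ F * φ) = fun F => L (ψ F * φ)) from rfl, h6] at h5
    exact h5
  -- convergence on the dense span
  have hspan : ∀ v ∈ Submodule.span ℂ (Set.range fun p : C₀(X, ℂ) × H => π p.1 p.2),
      Tendsto (fun F => (π (ψ F)) v) atTop (𝓝 v) := by
    intro v hv
    induction hv using Submodule.span_induction with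
    | mem x hx => obtain ⟨p, rfl⟩ := hx; exact hgen p.1 p.2
    | zero =>
        simpa using (tendsto_const_nhds : Tendsto (fun _ : Finset G => (0 : H)) atTop (𝓝 0))
    | add x y _ _ hx hy => simpa using hx.add hy
    | smul r x _ hx => simpa using hx.const_smul r
  -- convergence everywhere
  have hTall : ∀ v : H, Tendsto (fun F => (π (ψ F)) v) atTop (𝓝 v) := by
    intro v
    rw [Metric.tendsto_nhds]
    intro ε hε
    obtain ⟨v', hv'mem, hv'⟩ := hπnd.exists_dist_lt v (show (0 : ℝ) < ε / 3 by positivity)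
    have h1 := Metric.tendsto_nhds.mp (hspan v' hv'mem) (ε / 3) (by positivity)
    filter_upwards [h1] with F hF
    have ha : dist ((π (ψ F)) v) ((π (ψ F)) v') ≤ ε / 3 := by
      rw [dist_eq_norm, ← map_sub]
      calc ‖(π (ψ F)) (v - v')‖ ≤ ‖π (ψ F)‖ * ‖v - v'‖ := (π (ψ F)).le_opNorm _
        _ ≤ 1 * ‖v - v'‖ := mul_le_mul_of_nonneg_right (hTnorm F) (norm_nonneg _)
        _ ≤ ε / 3 := by rw [one_mul, ← dist_eq_norm]; exact hv'.le
    have hd4 := dist_triangle4 ((π (ψ F)) v) ((π (ψ F)) v') v' v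
    have hcm : dist v' v = dist v v' := dist_comm _ _
    calc dist ((π (ψ F)) v) v
        ≤ dist ((π (ψ F)) v) ((π (ψ F)) v') + dist ((π (ψ F)) v') v' + dist v' v := hd4
      _ < ε := by rw [hcm]; linarith
  -- the key summability fact
  have hHasSum : ∀ v : H, HasSum (fun h : G => ‖π c ((u h : H →L[ℂ] H) v)‖ ^ 2) (‖v‖ ^ 2) := by
    intro v
    have h2 : Tendsto (fun F : Finset G => (inner ℂ ((π (ψ F)) v) v : ℂ)) atTop
        (𝓝 (inner ℂ v v : ℂ)) := (hTall v).inner tendsto_const_nhds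
    have h3 := (Complex.continuous_re.tendsto _).comp h2
    have h4 : ((inner ℂ v v : ℂ)).re = ‖v‖ ^ 2 := by
      simpa using inner_self_eq_norm_sq (𝕜 := ℂ) v
    rw [show (Complex.re ∘ fun F : Finset G => (inner ℂ ((π (ψ F)) v) v : ℂ))
        = fun F : Finset G => ((inner ℂ ((π (ψ F)) v) v : ℂ)).re from rfl, h4] at h3
    show Tendsto (fun F : Finset G => ∑ h ∈ F, ‖π c ((u h : H →L[ℂ] H) v)‖ ^ 2) atTop
      (𝓝 (‖v‖ ^ 2))
    rw [show (fun F : Finset G => ∑ h ∈ F, ‖π c ((u h : H →L[ℂ] H) v)‖ ^ 2)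
        = fun F : Finset G => ((inner ℂ ((π (ψ F)) v) v : ℂ)).re from funext fun F => hsum_eq F v]
    exact h3
  -- helper for rpow/pow conversion
  have h0pos : (0 : ℝ) < (2 : ENNReal).toReal := by norm_num
  have hpow : ∀ a : ℝ, a ^ ((2 : ENNReal).toReal) = a ^ (2 : ℕ) := fun a => by
    rw [show ((2 : ENNReal).toReal) = ((2 : ℕ) : ℝ) by norm_num, Real.rpow_natCast]
  -- membership in ℓ²
  have hmem : ∀ v : H, Memℓp (fun h : G => π c ((u h : H →L[ℂ] H) v)) 2 := by
    intro v
    apply memℓp_gen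
    exact Summable.congr (hHasSum v).summable fun h => (hpow _).symm
  -- the linear isometry V
  let Vlin : H →ₗ[ℂ] l2GH G H :=
    { toFun := fun v => ⟨fun h => π c ((u h : H →L[ℂ] H) v), hmem v⟩
      map_add' := fun v w => by
        apply lp.ext
        funext h
        show π c ((u h : H →L[ℂ] H) (v + w))
          = π c ((u h : H →L[ℂ] H) v) + π c ((u h : H →L[ℂ] H) w)
        simp [map_add]
      map_smul' := fun r v => by
        apply lp.ext
        funext h
        show π c ((u h : H →L[ℂ] H) (r • v)) = r • π c ((u h : H →L[ℂ] H) v)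
        simp [_root_.map_smul] }
  have hVnorm : ∀ v : H, ‖Vlin v‖ = ‖v‖ := by
    intro v
    have h1 := lp.norm_rpow_eq_tsum h0pos (Vlin v)
    have h2 : ∑' h : G, ‖(Vlin v) h‖ ^ ((2 : ENNReal).toReal) = ‖v‖ ^ (2 : ℕ) := by
      rw [show (fun h : G => ‖(Vlin v) h‖ ^ ((2 : ENNReal).toReal))
          = fun h : G => ‖π c ((u h : H →L[ℂ] H) v)‖ ^ (2 : ℕ) from
        funext fun h => hpow _]
      exact (hHasSum v).tsum_eq
    have h3 : ‖Vlin v‖ ^ (2 : ℕ) = ‖v‖ ^ (2 : ℕ) := by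
      rw [← hpow, h1, h2]
    calc ‖Vlin v‖ = Real.sqrt (‖Vlin v‖ ^ 2) := (Real.sqrt_sq (norm_nonneg _)).symm
      _ = Real.sqrt (‖v‖ ^ 2) := by rw [h3]
      _ = ‖v‖ := Real.sqrt_sq (norm_nonneg _)
  let Viso : H →ₗᵢ[ℂ] l2GH G H := ⟨Vlin, hVnorm⟩
  refine ⟨Viso.toContinuousLinearMap, fun v => Viso.norm_map v, fun v h => rfl, ?_, ?_⟩
  · -- the adjoint formula
    have hsingle : ∀ (h : G) (w : H),
        (ContinuousLinearMap.adjoint Viso.toContinuousLinearMap) (lp.single 2 h w)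
          = (u h⁻¹ : H →L[ℂ] H) (π c w) := by
      intro h w
      apply ext_inner_right ℂ
      intro v
      rw [ContinuousLinearMap.adjoint_inner_left, lp.inner_single_left]
      show (inner ℂ w (π c ((u h : H →L[ℂ] H) v)) : ℂ)
        = (inner ℂ ((u h⁻¹ : H →L[ℂ] H) (π c w)) v : ℂ)
      conv_lhs => rw [← hπcsa]
      rw [ContinuousLinearMap.adjoint_inner_right]
      conv_rhs => rw [← hUadj h]
      rw [ContinuousLinearMap.adjoint_inner_left]
    intro ξ
    have h0 := lp.hasSum_single (E := fun _ : G => H) (p := 2) (by norm_num) ξ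
    have h1 := h0.mapL (ContinuousLinearMap.adjoint Viso.toContinuousLinearMap)
    simp only [hsingle] at h1
    exact h1
  · -- the right translations
    intro g
    have hmemR : ∀ ξ : l2GH G H, Memℓp (fun h : G => ξ (h * g)) 2 := by
      intro ξ
      apply memℓp_gen
      exact ((Equiv.mulRight g).summable_iff
        (f := fun i : G => ‖ξ i‖ ^ ((2 : ENNReal).toReal))).mpr ((lp.memℓp ξ).summable h0pos)
    let Rlin : l2GH G H →ₗ[ℂ] l2GH G H :=
      { toFun := fun ξ => ⟨fun h => ξ (h * g), hmemR ξ⟩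
        map_add' := fun ξ η => by
          apply lp.ext
          funext h
          show (ξ + η : l2GH G H) (h * g) = (ξ (h * g) + η (h * g))
          rw [lp.coeFn_add]
          rfl
        map_smul' := fun r ξ => by
          apply lp.ext
          funext h
          show (r • ξ : l2GH G H) (h * g) = r • (ξ (h * g))
          rw [lp.coeFn_smul]
          rfl }
    have hRnorm : ∀ ξ : l2GH G H, ‖Rlin ξ‖ = ‖ξ‖ := by
      intro ξ
      have h1 := lp.norm_rpow_eq_tsum h0pos (Rlin ξ)
      have h2 := lp.norm_rpow_eq_tsum h0pos ξ
      have h3 : ∑' h : G, ‖(Rlin ξ) h‖ ^ ((2 : ENNReal).toReal)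
          = ∑' h : G, ‖ξ h‖ ^ ((2 : ENNReal).toReal) :=
        (Equiv.mulRight g).tsum_eq fun i : G => ‖ξ i‖ ^ ((2 : ENNReal).toReal)
      have h4 : ‖Rlin ξ‖ ^ (2 : ℕ) = ‖ξ‖ ^ (2 : ℕ) := by
        rw [← hpow, ← hpow, h1, h2, h3]
      calc ‖Rlin ξ‖ = Real.sqrt (‖Rlin ξ‖ ^ 2) := (Real.sqrt_sq (norm_nonneg _)).symm
        _ = Real.sqrt (‖ξ‖ ^ 2) := by rw [h4]
        _ = ‖ξ‖ := Real.sqrt_sq (norm_nonneg _)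
    let Riso : l2GH G H →ₗᵢ[ℂ] l2GH G H := ⟨Rlin, hRnorm⟩
    refine ⟨Riso.toContinuousLinearMap, fun ξ h => rfl, ?_⟩
    apply ContinuousLinearMap.ext
    intro v
    apply lp.ext
    funext h
    show π c ((u (h * g) : H →L[ℂ] H) v) = π c ((u h : H →L[ℂ] H) ((u g : H →L[ℂ] H) v))
    rw [map_mul]
    rfl
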